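/- Let K be a compact Hausdorff space and p ∈ K such that K \ {p} is countably tight, p is not isolated, and p is not in the closure of any countable discrete subset of K. Then the pseudocharacter of p in K is uncountable; in particular, for every countable family {U_n : n < ω} of open neighborhoods of p there is a point x ≠ p with x ∈ ⋂_n U_n. -/

import Mathlib

open Set Topology

/-- A subset `D` is discrete if each of its points has an open neighborhood
meeting `D` only in that point. -/
def IsDiscreteSubset {X : Type*} [TopologicalSpace X] (D : Set X) : Prop :=
  ∀ x ∈ D, ∃ U : Set X, IsOpen U ∧ x ∈ U ∧ U ∩ D = {x}

/-- A space is countably tight if every point in the closure of a set is in the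
closure of a countable subset of it. -/
def CountablyTight (X : Type*) [TopologicalSpace X] : Prop :=
  ∀ (A : Set X) (x : X), x ∈ closure A → ∃ C ⊆ A, C.Countable ∧ x ∈ closure C

/-- The pseudocharacter of a point: the least cardinality of a family of open
neighborhoods of the point whose intersection is exactly that singleton. -/
noncomputable def pseudoChar {X : Type*} [TopologicalSpace X] (x : X) : Cardinal :=
  sInf { c | ∃ B : Set (Set X), Cardinal.mk B = c ∧ (∀ U ∈ B, IsOpen U ∧ x ∈ U) ∧
    ⋂₀ B = {x} }

private lemma key {K : Type} [TopologicalSpace K] [CompactSpace K] [T2Space K] (p : K)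
    (hiso : ¬ IsOpen ({p} : Set K))
    (hnd : ∀ D : Set K, D.Countable → IsDiscreteSubset D → p ∉ closure D)
    (U : ℕ → Set K) (hU : ∀ n, IsOpen (U n) ∧ p ∈ U n) :
    ∃ x : K, x ≠ p ∧ ∀ n, x ∈ U n := by
  by_contra hcon
  push_neg at hcon
  have hInt : (⋂ n, U n) = {p} := by
    apply Subset.antisymm
    · intro x hx
      by_contra hxp
      obtain ⟨n, hn⟩ := hcon x hxp
      exact hn (mem_iInter.mp hx n)
    · intro x hx
      rw [mem_singleton_iff] at hx
      subst hx
      exact mem_iInter.mpr fun n => (hU n).2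
  -- compact neighborhoods V n ⊆ U n
  have hV' : ∀ n, ∃ t : Set K, (t ∈ 𝓝 p ∧ IsCompact t) ∧ t ⊆ U n := fun n =>
    (compact_basis_nhds p).mem_iff.mp ((hU n).1.mem_nhds (hU n).2)
  choose V hV1 hV2 using hV'
  set C : ℕ → Set K := fun n => ⋂ k ∈ Finset.range (n+1), V k with hC
  have hCmem : ∀ n, C n ∈ 𝓝 p := fun n =>
    (Filter.biInter_finset_mem _).mpr fun k _ => (hV1 k).1
  have hCclosed : ∀ n, IsClosed (C n) := fun n =>
    isClosed_biInter fun k _ => (hV1 k).2.isClosed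
  have hCsubV : ∀ n k, k ≤ n → C n ⊆ V k := by
    intro n k hk
    exact biInter_subset_of_mem (Finset.mem_range.mpr (Nat.lt_succ_of_le hk))
  have hCcomp : ∀ n, IsCompact (C n) := fun n =>
    (hV1 0).2.of_isClosed_subset (hCclosed n) (hCsubV n 0 (Nat.zero_le n))
  have hCanti : ∀ m n, m ≤ n → C n ⊆ C m := by
    intro m n hmn
    intro y hy
    apply mem_biInter
    intro k hk
    exact hCsubV n k (le_trans (Nat.lt_succ_iff.mp (Finset.mem_range.mp hk)) hmn) hy
  have hCU : ∀ n, C n ⊆ U n := fun n => (hCsubV n n le_rfl).trans (hV2 n)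
  have hCint : (⋂ n, C n) = {p} := by
    apply Subset.antisymm
    · exact (iInter_mono hCU).trans hInt.subset
    · intro x hx
      rw [mem_singleton_iff] at hx
      subst hx
      exact mem_iInter.mpr fun n => mem_of_mem_nhds (hCmem n)
  -- C is a neighborhood base
  have hbase : ∀ O : Set K, IsOpen O → p ∈ O → ∃ n, C n ⊆ O := by
    intro O hO hpO
    by_contra hno
    push_neg at hno
    have hne : ∀ n, (C n \ O).Nonempty := by
      intro n
      rcases not_subset.mp (hno n) with ⟨y, hy1, hy2⟩
      exact ⟨y, hy1, hy2⟩
    have := IsCompact.nonempty_iInter_of_sequence_nonempty_isCompact_isClosed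
      (fun n => C n \ O)
      (fun n => diff_subset_diff_left (hCanti n (n+1) (Nat.le_succ n)))
      hne ((hCcomp 0).diff hO)
      (fun n => (hCclosed n).sdiff hO)
    rcases this with ⟨y, hy⟩
    have hy' : ∀ n, y ∈ C n \ O := fun n => mem_iInter.mp hy n
    have hyC : y ∈ ⋂ n, C n := mem_iInter.mpr fun n => (hy' n).1
    rw [hCint, mem_singleton_iff] at hyC
    subst hyC
    exact (hy' 0).2 hpO
  -- pick points x n ≠ p in interior (C n)
  have hx' : ∀ n, ∃ y, y ∈ interior (C n) ∧ y ≠ p := by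
    intro n
    by_contra hno
    push_neg at hno
    have heq : interior (C n) = {p} := by
      apply Subset.antisymm
      · intro y hy; exact hno y hy
      · intro y hy
        rw [mem_singleton_iff] at hy; subst hy
        exact mem_interior_iff_mem_nhds.mpr (hCmem n)
    exact hiso (heq ▸ isOpen_interior)
  choose x hx1 hx2 using hx'
  set D : Set K := range x with hD
  have hDc : D.Countable := countable_range x
  have hpD : p ∈ closure D := by
    rw [mem_closure_iff]
    intro O hO hpO
    obtain ⟨n, hn⟩ := hbase O hO hpO
    exact ⟨x n, hn (interior_subset (hx1 n)), mem_range_self n⟩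
  have hDdisc : IsDiscreteSubset D := by
    rintro y ⟨m, rfl⟩
    obtain ⟨Vm, W, hVm, hW, hxVm, hpW, hVW⟩ := t2_separation (hx2 m)
    obtain ⟨n, hn⟩ := hbase W hW hpW
    set S : Set K := (x '' Iio n) \ {x m} with hS
    have hSfin : S.Finite := ((finite_Iio n).image x).diff
    refine ⟨Vm \ S, hVm.sdiff hSfin.isClosed, ⟨hxVm, fun h => h.2 rfl⟩, ?_⟩
    apply Subset.antisymm
    · rintro z ⟨⟨hzV, hzS⟩, k, rfl⟩
      by_cases hk : k < n
      · by_contra hne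
        exact hzS ⟨⟨k, hk, rfl⟩, hne⟩
      · exfalso
        have hxkW : x k ∈ W := hn (hCanti n k (le_of_not_gt hk) (interior_subset (hx1 k)))
        exact (disjoint_left.mp hVW hzV) hxkW
    · intro z hz
      rw [mem_singleton_iff] at hz; subst hz
      exact ⟨⟨hxVm, fun h => h.2 rfl⟩, mem_range_self m⟩
  exact hnd D hDc hDdisc hpD

/-- If `K` is compact Hausdorff, `p ∈ K`, `K \ {p}` is countably tight, `p` is not
isolated, and `p` is not in the closure of any countable discrete subset of `K`, then
the pseudocharacter of `p` is uncountable; in particular every countable family of open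
neighborhoods of `p` has a point other than `p` in its intersection. -/
theorem statement0 {K : Type} [TopologicalSpace K] [CompactSpace K] [T2Space K] (p : K)
    (hct : CountablyTight ↥({p}ᶜ : Set K))
    (hiso : ¬ IsOpen ({p} : Set K))
    (hnd : ∀ D : Set K, D.Countable → IsDiscreteSubset D → p ∉ closure D) :
    Cardinal.aleph0 < pseudoChar p ∧
      ∀ U : ℕ → Set K, (∀ n, IsOpen (U n) ∧ p ∈ U n) →
        ∃ x : K, x ≠ p ∧ ∀ n, x ∈ U n := by
  have hS : Set.Nonempty { c | ∃ B : Set (Set K), Cardinal.mk B = c ∧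
      (∀ U ∈ B, IsOpen U ∧ p ∈ U) ∧ ⋂₀ B = {p} } := by
    refine ⟨_, {U | IsOpen U ∧ p ∈ U}, rfl, fun U hU => hU, ?_⟩
    apply Subset.antisymm
    · intro y hy
      rw [mem_singleton_iff]
      by_contra hyp
      exact (hy ({y}ᶜ) ⟨isOpen_compl_singleton, fun h => hyp (h.symm)⟩) rfl
    · intro y hy
      rw [mem_singleton_iff] at hy; subst hy
      intro t ht
      exact ht.2
  have hall : ∀ c ∈ { c | ∃ B : Set (Set K), Cardinal.mk B = c ∧
      (∀ U ∈ B, IsOpen U ∧ p ∈ U) ∧ ⋂₀ B = {p} }, Cardinal.aleph0 < c := by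
    rintro c ⟨B, rfl, hB, hBint⟩
    by_contra hle
    push_neg at hle
    have hBc : B.Countable := by
      rw [Set.countable_coe_iff.symm, ← Cardinal.mk_le_aleph0_iff]
      exact hle
    rcases B.eq_empty_or_nonempty with hBe | hBne
    · subst hBe
      rw [sInter_empty] at hBint
      exact hiso (hBint ▸ isOpen_univ)
    · obtain ⟨f, hf⟩ := Set.Countable.exists_eq_range hBc hBne
      obtain ⟨x, hxp, hx⟩ := key p hiso hnd f
        (fun n => hB (f n) (hf ▸ mem_range_self n))
      have : x ∈ ⋂₀ B := by
        intro t ht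
        rw [hf] at ht
        obtain ⟨n, rfl⟩ := ht
        exact hx n
      rw [hBint, mem_singleton_iff] at this
      exact hxp this
  constructor
  · exact hall _ (csInf_mem hS)
  · intro U hU
    exact key p hiso hnd U hU
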